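/- arXiv:2205.08323 — 2 statements merged into one kernel-verified Lean document; each statement's English description precedes it below -/
import Mathlib

section
/- For the pp-wave metric g = x²dt² + 2dtdz + dx² + dy² on ℝ⁴, the vector fields k₁ = ∂_t, k₂ = e^{-t}(∂_x + x∂_z), k₃ = ∂_y, k₄ = ∂_z are Killing fields, and the Lie algebra they span (with minus the vector field bracket) is solvable with the only nonzero bracket [k₁,k₂] = k₂ (up to sign conventions: the flow bracket gives [∂_t, e^{-t}(∂_x+x∂_z)] = -e^{-t}(∂_x+x∂_z)). -/
open Matrix

/-- Vector fields on ℝ⁴. -/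
abbrev VF := (Fin 4 → ℝ) → Fin 4 → ℝ

/-- Partial derivative in the i-th coordinate direction on ℝ⁴. -/
noncomputable def pd (i : Fin 4) (f : (Fin 4 → ℝ) → ℝ) (x : Fin 4 → ℝ) : ℝ :=
  fderiv ℝ f x (Pi.single i 1)

/-- The pp-wave metric g = x²dt² + 2dtdz + dx² + dy² in coordinates (t,x,y,z). -/
noncomputable def ppw (p : Fin 4 → ℝ) : Matrix (Fin 4) (Fin 4) ℝ :=
  !![(p 1) ^ 2, 0, 0, 1;
     0, 1, 0, 0;
     0, 0, 1, 0;
     1, 0, 0, 0]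

/-- Coordinate Lie derivative of a metric along a vector field. -/
noncomputable def lieD (g : (Fin 4 → ℝ) → Matrix (Fin 4) (Fin 4) ℝ)
    (X : VF) (p : Fin 4 → ℝ) (i j : Fin 4) : ℝ :=
  (∑ k, X p k * pd k (fun y => g y i j) p)
  + (∑ k, g p k j * pd i (fun y => X y k) p)
  + (∑ k, g p i k * pd j (fun y => X y k) p)

/-- Usual Lie bracket of vector fields. -/
noncomputable def vb (X Y : VF) : VF := fun p i =>
  ∑ k, (X p k * pd k (fun y => Y y i) p - Y p k * pd k (fun y => X y i) p)

/-- Minus the Lie bracket (the bracket of the symmetry algebra). -/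
noncomputable def mbr (X Y : VF) : VF := fun p i => -(vb X Y p i)

noncomputable def k₁ : VF := fun _ => ![1, 0, 0, 0]
noncomputable def k₂ : VF := fun p => ![0, Real.exp (-p 0), 0, p 1 * Real.exp (-p 0)]
noncomputable def k₃ : VF := fun _ => ![0, 0, 1, 0]
noncomputable def k₄ : VF := fun _ => ![0, 0, 0, 1]

section aux

theorem pd_eq {f : (Fin 4 → ℝ) → ℝ} {L : (Fin 4 → ℝ) →L[ℝ] ℝ} {p : Fin 4 → ℝ}
    (h : HasFDerivAt f L p) (i : Fin 4) : pd i f p = L (Pi.single i 1) := by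
  rw [pd, h.fderiv]

theorem pd_const (i : Fin 4) (c : ℝ) (p : Fin 4 → ℝ) : pd i (fun _ => c) p = 0 := by
  simp [pd]

theorem hproj (j : Fin 4) (p : Fin 4 → ℝ) :
    HasFDerivAt (fun y : Fin 4 → ℝ => y j)
      (ContinuousLinearMap.proj (R := ℝ) (φ := fun _ : Fin 4 => ℝ) j) p :=
  (ContinuousLinearMap.proj (R := ℝ) (φ := fun _ : Fin 4 => ℝ) j).hasFDerivAt

theorem pd_sq (i : Fin 4) (p : Fin 4 → ℝ) :
    pd i (fun y => (y 1) ^ 2) p = if i = 1 then 2 * p 1 else 0 := by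
  simp only [pow_two]
  rw [pd_eq (f := fun y => y 1 * y 1) ((hproj 1 p).mul (hproj 1 p)) i]
  fin_cases i <;> simp [Pi.single_apply] <;> ring

theorem hexp (p : Fin 4 → ℝ) :
    HasFDerivAt (fun y : Fin 4 → ℝ => Real.exp (-y 0))
      (Real.exp (-p 0) • -(ContinuousLinearMap.proj (R := ℝ) (φ := fun _ : Fin 4 => ℝ) 0)) p :=
  by
    have h : HasFDerivAt (fun y : Fin 4 → ℝ => -y 0)
        (-(ContinuousLinearMap.proj (R := ℝ) (φ := fun _ : Fin 4 => ℝ) 0)) p := (hproj 0 p).neg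
    exact (Real.hasDerivAt_exp (-p 0)).comp_hasFDerivAt p h

theorem pd_exp (i : Fin 4) (p : Fin 4 → ℝ) :
    pd i (fun y => Real.exp (-y 0)) p = if i = 0 then -Real.exp (-p 0) else 0 := by
  rw [pd_eq (hexp p) i]
  fin_cases i <;> simp [Pi.single_apply]

theorem hxe (p : Fin 4 → ℝ) :
    HasFDerivAt (fun y : Fin 4 → ℝ => y 1 * Real.exp (-y 0))
      (p 1 • (Real.exp (-p 0) • -(ContinuousLinearMap.proj (R := ℝ) (φ := fun _ : Fin 4 => ℝ) 0))
        + Real.exp (-p 0) • (ContinuousLinearMap.proj (R := ℝ) (φ := fun _ : Fin 4 => ℝ) 1)) p :=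
  (hproj 1 p).mul (hexp p)

theorem pd_xe (i : Fin 4) (p : Fin 4 → ℝ) :
    pd i (fun y => y 1 * Real.exp (-y 0)) p =
      (if i = 1 then Real.exp (-p 0) else 0) - (if i = 0 then p 1 * Real.exp (-p 0) else 0) := by
  rw [pd_eq (hxe p) i]
  fin_cases i <;> simp [Pi.single_apply]

theorem pd_cexp (i : Fin 4) (c : ℝ) (p : Fin 4 → ℝ) :
    pd i (fun y => c * Real.exp (-y 0)) p = c * (if i = 0 then -Real.exp (-p 0) else 0) := by
  rw [pd_eq ((hexp p).const_mul c) i]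
  fin_cases i <;> simp [Pi.single_apply] <;> ring

theorem pd_cxe (i : Fin 4) (c : ℝ) (p : Fin 4 → ℝ) :
    pd i (fun y => c * (y 1 * Real.exp (-y 0))) p =
      c * ((if i = 1 then Real.exp (-p 0) else 0) - (if i = 0 then p 1 * Real.exp (-p 0) else 0)) := by
  rw [pd_eq ((hxe p).const_mul c) i]
  fin_cases i <;> simp [Pi.single_apply] <;> ring

theorem pd_cxe_add (i : Fin 4) (c d : ℝ) (p : Fin 4 → ℝ) :
    pd i (fun y => c * (y 1 * Real.exp (-y 0)) + d) p =
      c * ((if i = 1 then Real.exp (-p 0) else 0) - (if i = 0 then p 1 * Real.exp (-p 0) else 0)) := by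
  rw [pd_eq (((hxe p).const_mul c).add_const d) i]
  fin_cases i <;> simp [Pi.single_apply] <;> ring

theorem mem_span_quad {X : VF} (h : X ∈ Submodule.span ℝ ({k₁, k₂, k₃, k₄} : Set VF)) :
    ∃ a b c d : ℝ, X = a • k₁ + (b • k₂ + (c • k₃ + d • k₄)) := by
  rw [show ({k₁, k₂, k₃, k₄} : Set VF) = insert k₁ (insert k₂ (insert k₃ {k₄})) from rfl,
    Submodule.mem_span_insert] at h
  obtain ⟨a, z, hz, rfl⟩ := h
  rw [Submodule.mem_span_insert] at hz
  obtain ⟨b, w, hw, rfl⟩ := hz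
  rw [Submodule.mem_span_insert] at hw
  obtain ⟨c, v, hv, rfl⟩ := hw
  rw [Submodule.mem_span_singleton] at hv
  obtain ⟨d, rfl⟩ := hv
  exact ⟨a, b, c, d, rfl⟩

theorem mbr_comb (a b c d a' b' c' d' : ℝ) (p : Fin 4 → ℝ) (i : Fin 4) :
    mbr (a • k₁ + (b • k₂ + (c • k₃ + d • k₄))) (a' • k₁ + (b' • k₂ + (c' • k₃ + d' • k₄))) p i
      = ((a * b' - b * a') • k₂) p i := by
  fin_cases i <;>
    simp [mbr, vb, k₁, k₂, k₃, k₄, Fin.sum_univ_four, pd_const, pd_cexp, pd_cxe, pd_cxe_add,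
      vecHead, vecTail] <;> ring

theorem mbr_ck₂ (c d : ℝ) (p : Fin 4 → ℝ) (i : Fin 4) :
    mbr (c • k₂) (d • k₂) p i = 0 := by
  fin_cases i <;>
    simp [mbr, vb, k₂, Fin.sum_univ_four, pd_const, pd_cexp, pd_cxe, vecHead, vecTail] <;> ring

end aux

/-- k₁,k₂,k₃,k₄ are Killing fields of the pp-wave metric, the only nonzero
bracket among them (with minus the vector field bracket) is [k₁,k₂] = k₂, and
the Lie algebra they span is solvable (its derived algebra is abelian). -/
theorem ppwave_killing_solvable :
    (∀ p i j, lieD ppw k₁ p i j = 0) ∧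
    (∀ p i j, lieD ppw k₂ p i j = 0) ∧
    (∀ p i j, lieD ppw k₃ p i j = 0) ∧
    (∀ p i j, lieD ppw k₄ p i j = 0) ∧
    (∀ p i, mbr k₁ k₂ p i = k₂ p i) ∧
    (∀ p i, vb k₁ k₂ p i = -k₂ p i) ∧
    (∀ p i, mbr k₁ k₃ p i = 0) ∧ (∀ p i, mbr k₁ k₄ p i = 0) ∧
    (∀ p i, mbr k₂ k₃ p i = 0) ∧ (∀ p i, mbr k₂ k₄ p i = 0) ∧
    (∀ p i, mbr k₃ k₄ p i = 0) ∧
    (∀ X Y Z W : VF, X ∈ Submodule.span ℝ ({k₁, k₂, k₃, k₄} : Set VF) →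
      Y ∈ Submodule.span ℝ ({k₁, k₂, k₃, k₄} : Set VF) →
      Z ∈ Submodule.span ℝ ({k₁, k₂, k₃, k₄} : Set VF) →
      W ∈ Submodule.span ℝ ({k₁, k₂, k₃, k₄} : Set VF) →
      ∀ p i, mbr (mbr X Y) (mbr Z W) p i = 0) := by
  refine ⟨?_, ?_, ?_, ?_, ?_, ?_, ?_, ?_, ?_, ?_, ?_, ?_⟩
  · intro p i j
    fin_cases i <;> fin_cases j <;>
      simp [lieD, ppw, k₁, Fin.sum_univ_four, pd_const, pd_sq, pd_exp, pd_xe, vecHead, vecTail]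
  · intro p i j
    fin_cases i <;> fin_cases j <;>
      simp [lieD, ppw, k₂, Fin.sum_univ_four, pd_const, pd_sq, pd_exp, pd_xe, vecHead, vecTail] <;>
      ring
  · intro p i j
    fin_cases i <;> fin_cases j <;>
      simp [lieD, ppw, k₃, Fin.sum_univ_four, pd_const, pd_sq, pd_exp, pd_xe, vecHead, vecTail]
  · intro p i j
    fin_cases i <;> fin_cases j <;>
      simp [lieD, ppw, k₄, Fin.sum_univ_four, pd_const, pd_sq, pd_exp, pd_xe, vecHead, vecTail]
  · intro p i
    fin_cases i <;>
      simp [mbr, vb, k₁, k₂, Fin.sum_univ_four, pd_const, pd_exp, pd_xe, vecHead, vecTail]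
  · intro p i
    fin_cases i <;>
      simp [vb, k₁, k₂, Fin.sum_univ_four, pd_const, pd_exp, pd_xe, vecHead, vecTail]
  · intro p i
    fin_cases i <;>
      simp [mbr, vb, k₁, k₃, Fin.sum_univ_four, pd_const, vecHead, vecTail]
  · intro p i
    fin_cases i <;>
      simp [mbr, vb, k₁, k₄, Fin.sum_univ_four, pd_const, vecHead, vecTail]
  · intro p i
    fin_cases i <;>
      simp [mbr, vb, k₂, k₃, Fin.sum_univ_four, pd_const, pd_exp, pd_xe, vecHead, vecTail]
  · intro p i
    fin_cases i <;>
      simp [mbr, vb, k₂, k₄, Fin.sum_univ_four, pd_const, pd_exp, pd_xe, vecHead, vecTail]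
  · intro p i
    fin_cases i <;>
      simp [mbr, vb, k₃, k₄, Fin.sum_univ_four, pd_const, vecHead, vecTail]
  · intro X Y Z W hX hY hZ hW p i
    obtain ⟨a₁, b₁, c₁, d₁, rfl⟩ := mem_span_quad hX
    obtain ⟨a₂, b₂, c₂, d₂, rfl⟩ := mem_span_quad hY
    obtain ⟨a₃, b₃, c₃, d₃, rfl⟩ := mem_span_quad hZ
    obtain ⟨a₄, b₄, c₄, d₄, rfl⟩ := mem_span_quad hW
    have h1 : mbr (a₁ • k₁ + (b₁ • k₂ + (c₁ • k₃ + d₁ • k₄)))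
        (a₂ • k₁ + (b₂ • k₂ + (c₂ • k₃ + d₂ • k₄))) = (a₁ * b₂ - b₁ * a₂) • k₂ :=
      funext fun p => funext fun i => mbr_comb a₁ b₁ c₁ d₁ a₂ b₂ c₂ d₂ p i
    have h2 : mbr (a₃ • k₁ + (b₃ • k₂ + (c₃ • k₃ + d₃ • k₄)))
        (a₄ • k₁ + (b₄ • k₂ + (c₄ • k₃ + d₄ • k₄))) = (a₃ * b₄ - b₃ * a₄) • k₂ :=
      funext fun p => funext fun i => mbr_comb a₃ b₃ c₃ d₃ a₄ b₄ c₄ d₄ p i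
    rw [h1, h2]
    exact mbr_ck₂ _ _ p i
end

section
/- On the 3-dimensional Heisenberg group realized as ℝ³ with coordinates (x₁,x₂,x₃) and metric g = dx₁² - dx₂² + (dx₃ - x₁dx₂)², for any arc-length parametrized geodesic-like curve γ(t) = (γ₁(t),γ₂(t),γ₃(t)) satisfying the conformal circle equations with u₁ = (1/√2)(γ₁'-γ₂'), u₂ = γ₃'-γ₁γ₂', u₃ = (1/√2)(γ₁'+γ₂'), a₁ = -u₁u₂+u₁', a₂ = u₂', a₃ = u₃u₂+u₃', the quantities E = 2a₁a₃ + a₂² + u₂² and J = -a₃u₁ + a₁u₃ - u₂/2 are constant along γ. -/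
/-- Conserved quantities E and J along conformal circles of the metric
g = dx₁² - dx₂² + (dx₃ - x₁dx₂)² on the 3-dimensional Heisenberg group. -/
theorem heisenberg_conserved_quantities
    (γ₁ γ₂ γ₃ u₁ u₂ u₃ a₁ a₂ a₃ : ℝ → ℝ)
    (hγ₁ : Differentiable ℝ γ₁) (hγ₂ : Differentiable ℝ γ₂)
    (hγ₃ : Differentiable ℝ γ₃)
    (hu₁d : Differentiable ℝ u₁) (hu₂d : Differentiable ℝ u₂)
    (hu₃d : Differentiable ℝ u₃)
    (ha₁d : Differentiable ℝ a₁) (ha₂d : Differentiable ℝ a₂)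
    (ha₃d : Differentiable ℝ a₃)
    (hu₁ : ∀ t, u₁ t = (1 / Real.sqrt 2) * (deriv γ₁ t - deriv γ₂ t))
    (hu₂ : ∀ t, u₂ t = deriv γ₃ t - γ₁ t * deriv γ₂ t)
    (hu₃ : ∀ t, u₃ t = (1 / Real.sqrt 2) * (deriv γ₁ t + deriv γ₂ t))
    (ha₁ : ∀ t, a₁ t = -(u₁ t * u₂ t) + deriv u₁ t)
    (ha₂ : ∀ t, a₂ t = deriv u₂ t)
    (ha₃ : ∀ t, a₃ t = u₃ t * u₂ t + deriv u₃ t)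
    (hA₁ : ∀ t, deriv a₁ t =
      -(u₁ t) * (2 * a₁ t * a₃ t + (a₂ t) ^ 2) + u₁ t * (u₂ t) ^ 2
      + (1/2) * u₁ t * a₂ t + (1/2) * u₂ t * a₁ t)
    (hA₂ : ∀ t, deriv a₂ t =
      -(u₂ t) * (2 * a₁ t * a₃ t + (a₂ t) ^ 2) + (u₂ t) ^ 3 - u₂ t
      + (1/2) * u₃ t * a₁ t - (1/2) * u₁ t * a₃ t)
    (hA₃ : ∀ t, deriv a₃ t =
      -(u₃ t) * (2 * a₁ t * a₃ t + (a₂ t) ^ 2) + u₃ t * (u₂ t) ^ 2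
      - (1/2) * u₃ t * a₂ t - (1/2) * u₂ t * a₃ t)
    (hconstr₁ : ∀ t, 2 * u₁ t * u₃ t + (u₂ t) ^ 2 = 1)
    (hconstr₂ : ∀ t, u₁ t * a₃ t + u₂ t * a₂ t + u₃ t * a₁ t = 0) :
    (∀ t, deriv (fun s => 2 * a₁ s * a₃ s + (a₂ s) ^ 2 + (u₂ s) ^ 2) t = 0) ∧
    (∀ t, deriv (fun s => -(a₃ s * u₁ s) + a₁ s * u₃ s - u₂ s / 2) t = 0) := by
  have du₁ : ∀ t, deriv u₁ t = a₁ t + u₁ t * u₂ t := fun t => by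
    have := ha₁ t; linarith
  have du₂ : ∀ t, deriv u₂ t = a₂ t := fun t => (ha₂ t).symm
  have du₃ : ∀ t, deriv u₃ t = a₃ t - u₃ t * u₂ t := fun t => by
    have := ha₃ t; linarith
  constructor
  · intro t
    have h1 := (ha₁d t).hasDerivAt
    have h2 := (ha₂d t).hasDerivAt
    have h3 := (ha₃d t).hasDerivAt
    have hu := (hu₂d t).hasDerivAt
    have hE := (((h1.const_mul 2).mul h3).add (h2.pow 2)).add (hu.pow 2)
    rw [show deriv (fun s => 2 * a₁ s * a₃ s + (a₂ s) ^ 2 + (u₂ s) ^ 2) t = _ from hE.deriv]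
    rw [hA₁ t, hA₂ t, hA₃ t, du₂ t]
    linear_combination (2 * (u₂ t) ^ 2 - 2 * (2 * a₁ t * a₃ t + (a₂ t) ^ 2)) * hconstr₂ t
  · intro t
    have h1 := (ha₁d t).hasDerivAt
    have h2 := (ha₂d t).hasDerivAt
    have h3 := (ha₃d t).hasDerivAt
    have hv1 := (hu₁d t).hasDerivAt
    have hv2 := (hu₂d t).hasDerivAt
    have hv3 := (hu₃d t).hasDerivAt
    have hJ := (((h3.mul hv1).neg.add (h1.mul hv3)).sub (hv2.div_const 2))
    rw [show deriv (fun s => -(a₃ s * u₁ s) + a₁ s * u₃ s - u₂ s / 2) t = _ from hJ.deriv]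
    rw [hA₁ t, hA₃ t, du₁ t, du₂ t, du₃ t]
    linear_combination (-(1/2) * u₂ t) * hconstr₂ t + ((1/2) * a₂ t) * hconstr₁ t
end
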